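/- Let f, F ∈ A depend only on the single variable u, and suppose f·(∂F/∂u) = a·F for some constant a ∈ ℂ, a ≠ 0, and let β ∈ ℂ. Then the master-formula λ-bracket with generator coefficients P_{(2,0)} = f·S₁(F)·S₁²(f), P_{(1,0)} = f·S₁(f)·(F + S₁(F) + β), P_{(−1,0)} = −S₁^{−1}(f)·f·(F + S₁^{−1}(F) + β), P_{(−2,0)} = −S₁^{−2}(f)·S₁^{−1}(F)·f, and P_T = 0 otherwise — corresponding to the essentially one-dimensional second-order operator P = f S₁∘F S₁∘f + f((F+β)S₁ + S₁∘(F+β))∘f − f((F+β)S₁^{−1} + S₁^{−1}∘(F+β))∘f − f S₁^{−1}∘F S₁^{−1}∘f — is skewsymmetric and satisfies the PVA-Jacobi identity for all triples of elements of A; i.e. P is a Hamiltonian difference operator. -/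

import Mathlib

open MvPolynomial

namespace MPVA

/-- The algebra of difference polynomials in `ℓ` generators on a `D`-dimensional lattice:
polynomials over `ℂ` in the variables `u^i_N`, `i ∈ Fin ℓ`, `N ∈ ℤ^D`. -/
abbrev A (ℓ D : ℕ) := MvPolynomial (Fin ℓ × (Fin D → ℤ)) ℂ

variable {ℓ D : ℕ}

/-- The shift automorphism `S^M` sending `u^i_N` to `u^i_{N+M}`. -/
noncomputable def Sh (M : Fin D → ℤ) : A ℓ D ≃ₐ[ℂ] A ℓ D :=
  renameEquiv ℂ ((Equiv.refl (Fin ℓ)).prodCongr (Equiv.addRight M))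

/-- The `α`-th standard basis vector `E_α ∈ ℤ^D`. -/
def E (α : Fin D) : Fin D → ℤ := fun β => if β = α then 1 else 0

/-- Coefficient `B_T(f,g)` of `λ^T` in the master-formula λ-bracket `{f_λ g}` determined
by the generator coefficients `{u^i_λ u^j} = Σ_T (P j i T)·λ^T`:
`{f_λ g} = Σ_{i,j,M,N,T'} (∂g/∂u^j_N)·S^N(P^{ji}_{T'})·S^{N+T'−M}(∂f/∂u^i_M)·λ^{N+T'−M}`. -/
noncomputable def B (P : Fin ℓ → Fin ℓ → (Fin D → ℤ) → A ℓ D)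
    (T : Fin D → ℤ) (f g : A ℓ D) : A ℓ D :=
  ∑ᶠ (i : Fin ℓ) (j : Fin ℓ) (M : Fin D → ℤ) (N : Fin D → ℤ),
    (pderiv (j, N) g) * (Sh N (P j i (T - N + M))) * (Sh T (pderiv (i, M) f))

/-- The family of generator coefficients has only finitely many nonzero members. -/
def FinSupp (P : Fin ℓ → Fin ℓ → (Fin D → ℤ) → A ℓ D) : Prop :=
  {x : (Fin ℓ × Fin ℓ) × (Fin D → ℤ) | P x.1.1 x.1.2 x.2 ≠ 0}.Finite

/-- The PVA-Jacobi identity for the triple `(f,g,h)`, written coefficient-wise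
(for all `T, U ∈ ℤ^D`, the coefficient of `λ^T μ^U` in
`Σ_U {f_λ B_U(g,h)}μ^U − Σ_T {g_μ B_T(f,h)}λ^T = Σ_{T,U} B_U(B_T(f,g),h)λ^{T+U}μ^U`). -/
def Jacobi (P : Fin ℓ → Fin ℓ → (Fin D → ℤ) → A ℓ D) (f g h : A ℓ D) : Prop :=
  ∀ T U : Fin D → ℤ,
    B P T f (B P U g h) - B P U g (B P T f h) = B P U (B P (T - U) f g) h

/-- For `D = 2`: the lattice point `(m,n) ∈ ℤ²`. -/
def v (m n : ℤ) : Fin 2 → ℤ := ![m, n]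

/-- For `D = 2`, `ℓ = 1`: the variable `u_{mn}` of the scalar two-dimensional algebra. -/
noncomputable def uu (m n : ℤ) : A 1 2 := X ((0 : Fin 1), v m n)

-- Auxiliary development

lemma Sh_apply (M : Fin D → ℤ) (p : A ℓ D) :
    Sh M p = rename (fun x : Fin ℓ × (Fin D → ℤ) => (x.1, x.2 + M)) p := rfl

lemma Sh_X (M : Fin D → ℤ) (i : Fin ℓ) (N : Fin D → ℤ) :
    Sh M (X (i, N)) = X (i, N + M) := by
  rw [Sh_apply, rename_X]

lemma Sh_C (M : Fin D → ℤ) (c : ℂ) : Sh (ℓ := ℓ) M (C c) = C c := by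
  rw [Sh_apply, rename_C]

lemma Sh_Sh (M N : Fin D → ℤ) (p : A ℓ D) : Sh M (Sh N p) = Sh (N + M) p := by
  rw [Sh_apply, Sh_apply, Sh_apply, rename_rename]
  have h : ((fun x : Fin ℓ × (Fin D → ℤ) => (x.1, x.2 + M)) ∘ fun x : Fin ℓ × (Fin D → ℤ) => (x.1, x.2 + N)) = fun x : Fin ℓ × (Fin D → ℤ) => (x.1, x.2 + (N + M)) := by
    funext x; simp [add_assoc]
  rw [h]

lemma Sh_zero (p : A ℓ D) : Sh 0 p = p := by
  rw [Sh_apply]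
  have : (fun x : Fin ℓ × (Fin D → ℤ) => (x.1, x.2 + 0)) = id := by
    funext x; simp
  rw [this, rename_id, AlgHom.id_apply]

lemma pderiv_Sh (i : Fin ℓ) (N M : Fin D → ℤ) (p : A ℓ D) :
    pderiv (i, N) (Sh M p) = Sh M (pderiv (i, N - M) p) := by
  have hinj : Function.Injective (fun x : Fin ℓ × (Fin D → ℤ) => (x.1, x.2 + M)) := by
    intro x y h
    simp only [Prod.mk.injEq] at h
    exact Prod.ext h.1 (by have := h.2; exact add_right_cancel this)
  have := pderiv_rename hinj (i, N - M) p
  simp only at this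
  rw [Sh_apply, Sh_apply, ← this, sub_add_cancel]

lemma vars_snd (p : A 1 2) (N : Fin 2 → ℤ) (h : N ∉ p.vars.image Prod.snd) :
    pderiv ((0 : Fin 1), N) p = 0 :=
  pderiv_eq_zero_of_notMem_vars fun hm => h (Finset.mem_image_of_mem Prod.snd hm)

lemma B_eq (P : Fin 1 → Fin 1 → (Fin 2 → ℤ) → A 1 2) (T : Fin 2 → ℤ) (p q : A 1 2)
    (s t : Finset (Fin 2 → ℤ))
    (hs : ∀ M ∉ s, pderiv ((0 : Fin 1), M) p = 0)
    (ht : ∀ N ∉ t, pderiv ((0 : Fin 1), N) q = 0) :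
    B P T p q = ∑ M ∈ s, ∑ N ∈ t,
      pderiv ((0 : Fin 1), N) q * Sh N (P 0 0 (T - N + M)) * Sh T (pderiv ((0 : Fin 1), M) p) := by
  unfold B
  rw [finsum_unique, finsum_unique]
  have hd : (default : Fin 1) = 0 := rfl
  rw [hd]
  have h1 : ∀ M : Fin 2 → ℤ,
      (∑ᶠ N : Fin 2 → ℤ, pderiv ((0 : Fin 1), N) q * Sh N (P 0 0 (T - N + M)) *
        Sh T (pderiv ((0 : Fin 1), M) p)) =
      ∑ N ∈ t, pderiv ((0 : Fin 1), N) q * Sh N (P 0 0 (T - N + M)) *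
        Sh T (pderiv ((0 : Fin 1), M) p) := by
    intro M
    apply finsum_eq_sum_of_support_subset
    intro N hN
    simp only [Function.mem_support] at hN
    by_contra hNt
    exact hN (by rw [ht N hNt, zero_mul, zero_mul])
  simp only [h1]
  apply finsum_eq_sum_of_support_subset
  intro M hM
  simp only [Function.mem_support] at hM
  by_contra hMs
  apply hM
  apply Finset.sum_eq_zero
  intro N _
  rw [hs M hMs, map_zero, mul_zero]




noncomputable def Vs (p : A 1 2) : Finset (Fin 2 → ℤ) := p.vars.image Prod.snd

lemma Vs_spec (p : A 1 2) : ∀ N ∉ Vs p, pderiv ((0 : Fin 1), N) p = 0 :=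
  fun N hN => vars_snd p N hN

lemma B_C_right (P : Fin 1 → Fin 1 → (Fin 2 → ℤ) → A 1 2) (T : Fin 2 → ℤ) (p : A 1 2) (c : ℂ) :
    B P T p (C c) = 0 := by
  rw [B_eq P T p (C c) (Vs p) ∅ (Vs_spec p) (fun N _ => pderiv_C)]
  simp

lemma B_C_left (P : Fin 1 → Fin 1 → (Fin 2 → ℤ) → A 1 2) (T : Fin 2 → ℤ) (q : A 1 2) (c : ℂ) :
    B P T (C c) q = 0 := by
  rw [B_eq P T (C c) q ∅ (Vs q) (fun N _ => pderiv_C) (Vs_spec q)]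
  simp

lemma B_add_right (P : Fin 1 → Fin 1 → (Fin 2 → ℤ) → A 1 2) (T : Fin 2 → ℤ) (p q q' : A 1 2) :
    B P T p (q + q') = B P T p q + B P T p q' := by
  have ht : ∀ N ∉ Vs q ∪ Vs q', pderiv ((0 : Fin 1), N) (q + q') = 0 := by
    intro N hN
    rcases Finset.notMem_union.mp hN with ⟨h1, h2⟩
    rw [map_add, Vs_spec q N h1, Vs_spec q' N h2, add_zero]
  rw [B_eq P T p (q + q') (Vs p) (Vs q ∪ Vs q') (Vs_spec p) ht,
    B_eq P T p q (Vs p) (Vs q ∪ Vs q') (Vs_spec p)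
      (fun N hN => Vs_spec q N (fun h => hN (Finset.mem_union_left _ h))),
    B_eq P T p q' (Vs p) (Vs q ∪ Vs q') (Vs_spec p)
      (fun N hN => Vs_spec q' N (fun h => hN (Finset.mem_union_right _ h)))]
  simp only [map_add, add_mul, Finset.sum_add_distrib]

lemma B_add_left (P : Fin 1 → Fin 1 → (Fin 2 → ℤ) → A 1 2) (T : Fin 2 → ℤ) (p p' q : A 1 2) :
    B P T (p + p') q = B P T p q + B P T p' q := by
  have hs : ∀ M ∉ Vs p ∪ Vs p', pderiv ((0 : Fin 1), M) (p + p') = 0 := by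
    intro M hM
    rcases Finset.notMem_union.mp hM with ⟨h1, h2⟩
    rw [map_add, Vs_spec p M h1, Vs_spec p' M h2, add_zero]
  rw [B_eq P T (p + p') q (Vs p ∪ Vs p') (Vs q) hs (Vs_spec q),
    B_eq P T p q (Vs p ∪ Vs p') (Vs q)
      (fun M hM => Vs_spec p M (fun h => hM (Finset.mem_union_left _ h))) (Vs_spec q),
    B_eq P T p' q (Vs p ∪ Vs p') (Vs q)
      (fun M hM => Vs_spec p' M (fun h => hM (Finset.mem_union_right _ h))) (Vs_spec q)]
  simp only [map_add, mul_add, Finset.sum_add_distrib]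

lemma B_mul_right (P : Fin 1 → Fin 1 → (Fin 2 → ℤ) → A 1 2) (T : Fin 2 → ℤ) (p q r : A 1 2) :
    B P T p (q * r) = q * B P T p r + r * B P T p q := by
  have ht : ∀ N ∉ Vs q ∪ Vs r, pderiv ((0 : Fin 1), N) (q * r) = 0 := by
    intro N hN
    rcases Finset.notMem_union.mp hN with ⟨h1, h2⟩
    rw [pderiv_mul, Vs_spec q N h1, Vs_spec r N h2, zero_mul, mul_zero, add_zero]
  rw [B_eq P T p (q * r) (Vs p) (Vs q ∪ Vs r) (Vs_spec p) ht,
    B_eq P T p r (Vs p) (Vs q ∪ Vs r) (Vs_spec p)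
      (fun N hN => Vs_spec r N (fun h => hN (Finset.mem_union_right _ h))),
    B_eq P T p q (Vs p) (Vs q ∪ Vs r) (Vs_spec p)
      (fun N hN => Vs_spec q N (fun h => hN (Finset.mem_union_left _ h)))]
  rw [Finset.mul_sum, Finset.mul_sum, ← Finset.sum_add_distrib]
  refine Finset.sum_congr rfl fun M _ => ?_
  rw [Finset.mul_sum, Finset.mul_sum, ← Finset.sum_add_distrib]
  refine Finset.sum_congr rfl fun N _ => ?_
  rw [pderiv_mul]
  ring

lemma B_mul_left (P : Fin 1 → Fin 1 → (Fin 2 → ℤ) → A 1 2) (T : Fin 2 → ℤ) (p p' q : A 1 2) :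
    B P T (p * p') q = Sh T p * B P T p' q + Sh T p' * B P T p q := by
  have hs : ∀ M ∉ Vs p ∪ Vs p', pderiv ((0 : Fin 1), M) (p * p') = 0 := by
    intro M hM
    rcases Finset.notMem_union.mp hM with ⟨h1, h2⟩
    rw [pderiv_mul, Vs_spec p M h1, Vs_spec p' M h2, zero_mul, mul_zero, add_zero]
  rw [B_eq P T (p * p') q (Vs p ∪ Vs p') (Vs q) hs (Vs_spec q),
    B_eq P T p' q (Vs p ∪ Vs p') (Vs q)
      (fun M hM => Vs_spec p' M (fun h => hM (Finset.mem_union_right _ h))) (Vs_spec q),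
    B_eq P T p q (Vs p ∪ Vs p') (Vs q)
      (fun M hM => Vs_spec p M (fun h => hM (Finset.mem_union_left _ h))) (Vs_spec q)]
  rw [Finset.mul_sum, Finset.mul_sum, ← Finset.sum_add_distrib]
  refine Finset.sum_congr rfl fun M _ => ?_
  rw [Finset.mul_sum, Finset.mul_sum, ← Finset.sum_add_distrib]
  refine Finset.sum_congr rfl fun N _ => ?_
  rw [pderiv_mul, map_add, map_mul, map_mul]
  ring

lemma B_Sh_left (P : Fin 1 → Fin 1 → (Fin 2 → ℤ) → A 1 2) (T K : Fin 2 → ℤ) (p q : A 1 2) :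
    B P T (Sh K p) q = B P (T + K) p q := by
  have hinj : Function.Injective (fun M : Fin 2 → ℤ => M + K) := fun x y h => by
    simpa using congrArg (fun z => z - K) h
  have hs : ∀ M ∉ (Vs p).image (· + K), pderiv ((0 : Fin 1), M) (Sh K p) = 0 := by
    intro M hM
    rw [pderiv_Sh, Vs_spec p (M - K) (fun h => hM (by
      refine Finset.mem_image.mpr ⟨M - K, h, ?_⟩
      simp)), map_zero]
  rw [B_eq P T (Sh K p) q ((Vs p).image (· + K)) (Vs q) hs (Vs_spec q),
    B_eq P (T + K) p q (Vs p) (Vs q) (Vs_spec p) (Vs_spec q),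
    Finset.sum_image (fun x _ y _ h => hinj h)]
  refine Finset.sum_congr rfl fun M _ => ?_
  refine Finset.sum_congr rfl fun N _ => ?_
  rw [pderiv_Sh, Sh_Sh]
  have h1 : T - N + (M + K) = T + K - N + M := by ring
  have h2 : M + K - K = M := by ring
  have h3 : K + T = T + K := by ring
  rw [h1, h2, h3]

lemma B_Sh_right (P : Fin 1 → Fin 1 → (Fin 2 → ℤ) → A 1 2) (T K : Fin 2 → ℤ) (p q : A 1 2) :
    B P T p (Sh K q) = Sh K (B P (T - K) p q) := by
  have hinj : Function.Injective (fun M : Fin 2 → ℤ => M + K) := fun x y h => by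
    simpa using congrArg (fun z => z - K) h
  have ht : ∀ N ∉ (Vs q).image (· + K), pderiv ((0 : Fin 1), N) (Sh K q) = 0 := by
    intro N hN
    rw [pderiv_Sh, Vs_spec q (N - K) (fun h => hN (by
      refine Finset.mem_image.mpr ⟨N - K, h, ?_⟩
      simp)), map_zero]
  rw [B_eq P T p (Sh K q) (Vs p) ((Vs q).image (· + K)) (Vs_spec p) ht,
    B_eq P (T - K) p q (Vs p) (Vs q) (Vs_spec p) (Vs_spec q), map_sum]
  refine Finset.sum_congr rfl fun M _ => ?_
  rw [map_sum, Finset.sum_image (fun x _ y _ h => hinj h)]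
  refine Finset.sum_congr rfl fun N _ => ?_
  rw [pderiv_Sh, map_mul, map_mul, Sh_Sh, Sh_Sh]
  have h1 : N + K - K = N := by ring
  have h2 : T - (N + K) + M = T - K - N + M := by ring
  have h3 : T - K + K = T := by ring
  rw [h1, h2, h3]

lemma B_XX (P : Fin 1 → Fin 1 → (Fin 2 → ℤ) → A 1 2) (T M N : Fin 2 → ℤ) :
    B P T (X ((0 : Fin 1), M)) (X ((0 : Fin 1), N)) = Sh N (P 0 0 (T - N + M)) := by
  have hs : ∀ M' ∉ ({M} : Finset (Fin 2 → ℤ)),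
      pderiv ((0 : Fin 1), M') (X ((0 : Fin 1), M) : A 1 2) = 0 := by
    intro M' hM'
    simp only [Finset.mem_singleton] at hM'
    exact pderiv_X_of_ne (fun h => hM' (congrArg Prod.snd h).symm)
  have ht : ∀ N' ∉ ({N} : Finset (Fin 2 → ℤ)),
      pderiv ((0 : Fin 1), N') (X ((0 : Fin 1), N) : A 1 2) = 0 := by
    intro N' hN'
    simp only [Finset.mem_singleton] at hN'
    exact pderiv_X_of_ne (fun h => hN' (congrArg Prod.snd h).symm)
  rw [B_eq P T _ _ {M} {N} hs ht, Finset.sum_singleton, Finset.sum_singleton,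
    pderiv_X_self, pderiv_X_self, map_one, one_mul, mul_one]



lemma Sh_neg_Sh (T : Fin 2 → ℤ) (p : A 1 2) : Sh (-T) (Sh T p) = p := by
  rw [Sh_Sh]
  have h : T + -T = 0 := by ring
  rw [h, Sh_zero]

section Skew

variable (P : Fin 1 → Fin 1 → (Fin 2 → ℤ) → A 1 2)
variable (hgen : ∀ K : Fin 2 → ℤ, P 0 0 (-K) = - Sh (-K) (P 0 0 K))

include hgen

lemma skew_XX (M N T : Fin 2 → ℤ) :
    B P (-T) (X ((0 : Fin 1), N)) (X ((0 : Fin 1), M)) =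
      - Sh (-T) (B P T (X ((0 : Fin 1), M)) (X ((0 : Fin 1), N))) := by
  rw [B_XX, B_XX, Sh_Sh]
  have h1 : -T - M + N = -(T - N + M) := by ring
  rw [h1, hgen (T - N + M), map_neg, Sh_Sh]
  have h2 : -(T - N + M) + M = N + -T := by ring
  rw [h2]

lemma skew_X : ∀ (q : A 1 2) (N T : Fin 2 → ℤ),
    B P (-T) q (X ((0 : Fin 1), N)) = - Sh (-T) (B P T (X ((0 : Fin 1), N)) q) := by
  intro q
  induction q using MvPolynomial.induction_on with
  | C c => intro N T; rw [B_C_left, B_C_right, map_zero, neg_zero]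
  | add q q' hq hq' =>
      intro N T
      rw [B_add_left, B_add_right, hq, hq', map_add, neg_add]
  | mul_X q n hq =>
      intro N T
      obtain ⟨i, M⟩ := n
      have hi := Fin.eq_zero i
      subst hi
      rw [B_mul_left, B_mul_right, skew_XX P hgen, hq, map_add, map_mul, map_mul]
      ring

lemma skew : ∀ (p q : A 1 2) (T : Fin 2 → ℤ), B P (-T) q p = - Sh (-T) (B P T p q) := by
  intro p
  induction p using MvPolynomial.induction_on with
  | C c => intro q T; rw [B_C_right, B_C_left, map_zero, neg_zero]
  | add p p' hp hp' =>
      intro q T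
      rw [B_add_right, B_add_left, hp, hp', map_add, neg_add]
  | mul_X p n hp =>
      intro q T
      obtain ⟨i, M⟩ := n
      have hi := Fin.eq_zero i
      subst hi
      rw [B_mul_right, B_mul_left, hp, skew_X P hgen, map_add, map_mul, map_mul]
      simp only [Sh_neg_Sh]
      ring

end Skew


section Jac

variable (P : Fin 1 → Fin 1 → (Fin 2 → ℤ) → A 1 2)

/-- The Jacobiator. -/
noncomputable def Jx (T U : Fin 2 → ℤ) (p q r : A 1 2) : A 1 2 :=
  B P T p (B P U q r) - B P U q (B P T p r) - B P U (B P (T - U) p q) r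

lemma B_zero_right (T : Fin 2 → ℤ) (p : A 1 2) : B P T p 0 = 0 := by
  have := B_C_right P T p 0
  rwa [map_zero] at this

lemma B_zero_left (T : Fin 2 → ℤ) (q : A 1 2) : B P T 0 q = 0 := by
  have := B_C_left P T q 0
  rwa [map_zero] at this

lemma Jx_C_r (T U : Fin 2 → ℤ) (p q : A 1 2) (c : ℂ) : Jx P T U p q (C c) = 0 := by
  unfold Jx
  simp only [B_C_left, B_C_right, B_zero_right, B_zero_left]
  ring

lemma Jx_C_q (T U : Fin 2 → ℤ) (p r : A 1 2) (c : ℂ) : Jx P T U p (C c) r = 0 := by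
  unfold Jx
  simp only [B_C_left, B_C_right, B_zero_right, B_zero_left]
  ring

lemma Jx_C_p (T U : Fin 2 → ℤ) (q r : A 1 2) (c : ℂ) : Jx P T U (C c) q r = 0 := by
  unfold Jx
  simp only [B_C_left, B_C_right, B_zero_right, B_zero_left]
  ring

lemma Jx_add_r (T U : Fin 2 → ℤ) (p q r r' : A 1 2) :
    Jx P T U p q (r + r') = Jx P T U p q r + Jx P T U p q r' := by
  unfold Jx
  simp only [B_add_right]
  ring

lemma Jx_add_q (T U : Fin 2 → ℤ) (p q q' r : A 1 2) :
    Jx P T U p (q + q') r = Jx P T U p q r + Jx P T U p q' r := by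
  unfold Jx
  simp only [B_add_left, B_add_right]
  ring

lemma Jx_add_p (T U : Fin 2 → ℤ) (p p' q r : A 1 2) :
    Jx P T U (p + p') q r = Jx P T U p q r + Jx P T U p' q r := by
  unfold Jx
  simp only [B_add_left, B_add_right]
  ring

lemma Jx_mul_r (T U : Fin 2 → ℤ) (p q r r' : A 1 2) :
    Jx P T U p q (r * r') = r * Jx P T U p q r' + r' * Jx P T U p q r := by
  unfold Jx
  simp only [B_mul_right, B_add_right]
  ring

lemma Jx_mul_q (T U : Fin 2 → ℤ) (p q q' r : A 1 2) :
    Jx P T U p (q * q') r = Sh U q * Jx P T U p q' r + Sh U q' * Jx P T U p q r := by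
  unfold Jx
  simp only [B_mul_left, B_mul_right, B_add_left, B_add_right, B_Sh_right]
  ring

lemma Jx_mul_p
    (hskew : ∀ (p q : A 1 2) (T : Fin 2 → ℤ), B P (-T) q p = - Sh (-T) (B P T p q))
    (T U : Fin 2 → ℤ) (p p' q r : A 1 2) :
    Jx P T U (p * p') q r = Sh T p * Jx P T U p' q r + Sh T p' * Jx P T U p q r := by
  unfold Jx
  simp only [B_mul_left, B_mul_right, B_add_left, B_add_right, B_Sh_right, B_Sh_left]
  rw [show U - T = -(T - U) from by ring]
  simp only [hskew, map_neg, Sh_Sh]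
  rw [show U + (T - U) = T from by ring, show -(T - U) + T = U from by ring,
    show T - U + U = T from by ring]
  ring

lemma Jx_Sh_p (T U K : Fin 2 → ℤ) (p q r : A 1 2) :
    Jx P T U (Sh K p) q r = Jx P (T + K) U p q r := by
  unfold Jx
  rw [B_Sh_left, B_Sh_left, B_Sh_left, show T - U + K = T + K - U from by ring]

lemma Jx_Sh_q (T U K : Fin 2 → ℤ) (p q r : A 1 2) :
    Jx P T U p (Sh K q) r = Jx P T (U + K) p q r := by
  unfold Jx
  rw [B_Sh_left, B_Sh_left, B_Sh_right, B_Sh_left,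
    show T - U - K = T - (U + K) from by ring]

lemma Jx_Sh_r (T U K : Fin 2 → ℤ) (p q r : A 1 2) :
    Jx P T U p q (Sh K r) = Sh K (Jx P (T - K) (U - K) p q r) := by
  unfold Jx
  rw [B_Sh_right, B_Sh_right, B_Sh_right, B_Sh_right, B_Sh_right,
    show T - K - (U - K) = T - U from by ring, map_sub, map_sub]

lemma X_eq_Sh (A' : Fin 2 → ℤ) :
    (X ((0 : Fin 1), A') : A 1 2) = Sh A' (X ((0 : Fin 1), (0 : Fin 2 → ℤ))) := by
  rw [Sh_X, zero_add]

lemma Jx_XXX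
    (hcore : ∀ T U : Fin 2 → ℤ,
      Jx P T U (X ((0 : Fin 1), (0 : Fin 2 → ℤ))) (X ((0 : Fin 1), (0 : Fin 2 → ℤ)))
        (X ((0 : Fin 1), (0 : Fin 2 → ℤ))) = 0)
    (T U A' B' C' : Fin 2 → ℤ) :
    Jx P T U (X ((0 : Fin 1), A')) (X ((0 : Fin 1), B')) (X ((0 : Fin 1), C')) = 0 := by
  rw [X_eq_Sh A', X_eq_Sh B', X_eq_Sh C', Jx_Sh_p, Jx_Sh_q, Jx_Sh_r, hcore, map_zero]

lemma Jx_eq_zero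
    (hskew : ∀ (p q : A 1 2) (T : Fin 2 → ℤ), B P (-T) q p = - Sh (-T) (B P T p q))
    (hcore : ∀ T U : Fin 2 → ℤ,
      Jx P T U (X ((0 : Fin 1), (0 : Fin 2 → ℤ))) (X ((0 : Fin 1), (0 : Fin 2 → ℤ)))
        (X ((0 : Fin 1), (0 : Fin 2 → ℤ))) = 0) :
    ∀ (p q r : A 1 2) (T U : Fin 2 → ℤ), Jx P T U p q r = 0 := by
  have hX2 : ∀ (r : A 1 2) (A' B' : Fin 2 → ℤ) (T U : Fin 2 → ℤ),
      Jx P T U (X ((0 : Fin 1), A')) (X ((0 : Fin 1), B')) r = 0 := by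
    intro r
    induction r using MvPolynomial.induction_on with
    | C c => intro A' B' T U; exact Jx_C_r P T U _ _ c
    | add r r' hr hr' => intro A' B' T U; rw [Jx_add_r, hr, hr', add_zero]
    | mul_X r n hr =>
        intro A' B' T U
        obtain ⟨i, C'⟩ := n
        have hi := Fin.eq_zero i
        subst hi
        rw [Jx_mul_r, hr, Jx_XXX P hcore, mul_zero, mul_zero, add_zero]
  have hX1 : ∀ (q r : A 1 2) (A' : Fin 2 → ℤ) (T U : Fin 2 → ℤ),
      Jx P T U (X ((0 : Fin 1), A')) q r = 0 := by
    intro q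
    induction q using MvPolynomial.induction_on with
    | C c => intro r A' T U; exact Jx_C_q P T U _ _ c
    | add q q' hq hq' => intro r A' T U; rw [Jx_add_q, hq, hq', add_zero]
    | mul_X q n hq =>
        intro r A' T U
        obtain ⟨i, B'⟩ := n
        have hi := Fin.eq_zero i
        subst hi
        rw [Jx_mul_q, hq, hX2 r A' B' T U, mul_zero, mul_zero, add_zero]
  intro p
  induction p using MvPolynomial.induction_on with
  | C c => intro q r T U; exact Jx_C_p P T U _ _ c
  | add p p' hp hp' => intro q r T U; rw [Jx_add_p, hp, hp', add_zero]
  | mul_X p n hp =>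
      intro q r T U
      obtain ⟨i, A'⟩ := n
      have hi := Fin.eq_zero i
      subst hi
      rw [Jx_mul_p P hskew, hp, hX1 q r A' T U, mul_zero, mul_zero, add_zero]

end Jac


lemma v_add (a b c d : ℤ) : v a b + v c d = v (a + c) (b + d) := by
  funext i; fin_cases i <;> simp [v]

lemma v_sub (a b c d : ℤ) : v a b - v c d = v (a - c) (b - d) := by
  funext i; fin_cases i <;> simp [v]

lemma v_neg (a b : ℤ) : -v a b = v (-a) (-b) := by
  funext i; fin_cases i <;> simp [v]

lemma v_eq_iff (a b c d : ℤ) : v a b = v c d ↔ a = c ∧ b = d := by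
  constructor
  · intro h
    exact ⟨congrFun h 0, congrFun h 1⟩
  · rintro ⟨rfl, rfl⟩; rfl

lemma v00 : v 0 0 = (0 : Fin 2 → ℤ) := by
  funext i; fin_cases i <;> rfl

lemma v_eq_zero (a b : ℤ) : v a b = 0 ↔ a = 0 ∧ b = 0 := by
  rw [← v00, v_eq_iff]

lemma T_eq (T : Fin 2 → ℤ) : T = v (T 0) (T 1) := by
  funext i; fin_cases i <;> rfl

lemma Sh_v00 (p : A 1 2) : Sh (v 0 0) p = p := by rw [v00, Sh_zero]

/-- The five-point variable window. -/
noncomputable def S5 : Finset (Fin 2 → ℤ) :=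
  insert (v (-2) 0) (insert (v (-1) 0) (insert (v 0 0) (insert (v 1 0) {v 2 0})))

section Specific

variable (f F f' F' : A 1 2) (b ai : ℂ)
variable (P : Fin 1 → Fin 1 → (Fin 2 → ℤ) → A 1 2)
variable (hdf : ∀ N : Fin 2 → ℤ, pderiv ((0 : Fin 1), N) f = if N = 0 then f' else 0)
variable (hdF : ∀ N : Fin 2 → ℤ, pderiv ((0 : Fin 1), N) F = if N = 0 then F' else 0)
variable (hFs : F = C ai * (f * F'))
variable (hP : P = fun _ _ T =>
      if T = v 2 0 then f * Sh (v 1 0) F * Sh (v 2 0) f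
      else if T = v 1 0 then f * Sh (v 1 0) f * (F + Sh (v 1 0) F + C b)
      else if T = v (-1) 0 then -(Sh (v (-1) 0) f * f * (F + Sh (v (-1) 0) F + C b))
      else if T = v (-2) 0 then -(Sh (v (-2) 0) f * Sh (v (-1) 0) F * f)
      else 0)

include hdf in
lemma dsf (N M : Fin 2 → ℤ) :
    pderiv ((0 : Fin 1), N) (Sh M f) = if N = M then Sh M f' else 0 := by
  rw [pderiv_Sh, hdf]
  simp only [sub_eq_zero]
  split_ifs <;> simp

include hdF in
lemma dsF (N M : Fin 2 → ℤ) :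
    pderiv ((0 : Fin 1), N) (Sh M F) = if N = M then Sh M F' else 0 := by
  rw [pderiv_Sh, hdF]
  simp only [sub_eq_zero]
  split_ifs <;> simp

include hFs in
lemma hGs (M : Fin 2 → ℤ) : Sh M F = C ai * (Sh M f * Sh M F') := by
  rw [hFs, map_mul, map_mul, Sh_C]

include hP in
lemma hPz2 (w z : ℤ) (hz : z ≠ 0) : P 0 0 (v w z) = 0 := by
  simp only [hP]
  rw [if_neg, if_neg, if_neg, if_neg] <;> rw [v_eq_iff] <;> omega

include hP in
lemma hPw2 (w z : ℤ) (h2 : w ≠ 2) (h1 : w ≠ 1) (hm1 : w ≠ -1) (hm2 : w ≠ -2) :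
    P 0 0 (v w z) = 0 := by
  simp only [hP]
  rw [if_neg, if_neg, if_neg, if_neg] <;> rw [v_eq_iff] <;> omega

include hP in
lemma hP2v : P 0 0 (v 2 0) = f * Sh (v 1 0) F * Sh (v 2 0) f := by simp [hP]

include hP in
lemma hP1v : P 0 0 (v 1 0) = f * Sh (v 1 0) f * (F + Sh (v 1 0) F + C b) := by
  simp [hP, v_eq_iff]

include hP in
lemma hPm1v : P 0 0 (v (-1) 0) = -(Sh (v (-1) 0) f * f * (F + Sh (v (-1) 0) F + C b)) := by
  simp [hP, v_eq_iff]

include hP in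
lemma hPm2v : P 0 0 (v (-2) 0) = -(Sh (v (-2) 0) f * Sh (v (-1) 0) F * f) := by
  simp [hP, v_eq_iff]

include hdf hdF hP in
lemma dPout (K N : Fin 2 → ℤ) (hN : N ∉ S5) : pderiv ((0 : Fin 1), N) (P 0 0 K) = 0 := by
  simp only [S5, Finset.mem_insert, Finset.mem_singleton, not_or] at hN
  obtain ⟨hm2, hm1, h0, h1, h2⟩ := hN
  have h0' : N ≠ 0 := by rw [← v00]; exact h0
  simp only [hP]
  split_ifs <;>
    simp [pderiv_mul, map_add, map_neg, pderiv_C, dsf f f' hdf, dsF F F' hdF, hdf, hdF,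
      hm2, hm1, h0', h1, h2]

end Specific


lemma mem_S5_elim (N : Fin 2 → ℤ) (hN : N ∈ S5) :
    N = v (-2) 0 ∨ N = v (-1) 0 ∨ N = v 0 0 ∨ N = v 1 0 ∨ N = v 2 0 := by
  simpa [S5, Finset.mem_insert, Finset.mem_singleton] using hN

lemma sum_S5 (g : (Fin 2 → ℤ) → A 1 2) :
    ∑ N ∈ S5, g N = g (v (-2) 0) + g (v (-1) 0) + g (v 0 0) + g (v 1 0) + g (v 2 0) := by
  rw [S5, Finset.sum_insert (by simp [Finset.mem_insert, Finset.mem_singleton, v_eq_iff]),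
    Finset.sum_insert (by simp [Finset.mem_insert, Finset.mem_singleton, v_eq_iff]),
    Finset.sum_insert (by simp [Finset.mem_insert, Finset.mem_singleton, v_eq_iff]),
    Finset.sum_insert (by simp [Finset.mem_singleton, v_eq_iff]),
    Finset.sum_singleton]
  ring

lemma pderiv_uX (M : Fin 2 → ℤ) (hM : M ∉ ({(0 : Fin 2 → ℤ)} : Finset (Fin 2 → ℤ))) :
    pderiv ((0 : Fin 1), M) (X ((0 : Fin 1), (0 : Fin 2 → ℤ)) : A 1 2) = 0 := by
  simp only [Finset.mem_singleton] at hM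
  exact pderiv_X_of_ne (fun h => hM (congrArg Prod.snd h).symm)

section Specific2

variable (f F f' F' : A 1 2) (b ai : ℂ)
variable (P : Fin 1 → Fin 1 → (Fin 2 → ℤ) → A 1 2)
variable (hdf : ∀ N : Fin 2 → ℤ, pderiv ((0 : Fin 1), N) f = if N = 0 then f' else 0)
variable (hdF : ∀ N : Fin 2 → ℤ, pderiv ((0 : Fin 1), N) F = if N = 0 then F' else 0)
variable (hFs : F = C ai * (f * F'))
variable (hP : P = fun _ _ T =>
      if T = v 2 0 then f * Sh (v 1 0) F * Sh (v 2 0) f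
      else if T = v 1 0 then f * Sh (v 1 0) f * (F + Sh (v 1 0) F + C b)
      else if T = v (-1) 0 then -(Sh (v (-1) 0) f * f * (F + Sh (v (-1) 0) F + C b))
      else if T = v (-2) 0 then -(Sh (v (-2) 0) f * Sh (v (-1) 0) F * f)
      else 0)

include hdf hdF hP in
lemma BLsum (T K : Fin 2 → ℤ) :
    B P T (X ((0 : Fin 1), (0 : Fin 2 → ℤ))) (P 0 0 K) =
      ∑ N ∈ S5, pderiv ((0 : Fin 1), N) (P 0 0 K) * Sh N (P 0 0 (T - N)) := by
  rw [B_eq P T _ (P 0 0 K) {(0 : Fin 2 → ℤ)} S5 pderiv_uX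
    (fun N hN => dPout f F f' F' b P hdf hdF hP K N hN), Finset.sum_singleton]
  refine Finset.sum_congr rfl fun N _ => ?_
  rw [pderiv_X_self, map_one, mul_one, add_zero]

include hdf hdF hP in
lemma BRsum (U K : Fin 2 → ℤ) :
    B P U (P 0 0 K) (X ((0 : Fin 1), (0 : Fin 2 → ℤ))) =
      ∑ M ∈ S5, P 0 0 (U + M) * Sh U (pderiv ((0 : Fin 1), M) (P 0 0 K)) := by
  rw [B_eq P U (P 0 0 K) _ S5 {(0 : Fin 2 → ℤ)}
    (fun N hN => dPout f F f' F' b P hdf hdF hP K N hN) pderiv_uX]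
  refine Finset.sum_congr rfl fun M _ => ?_
  rw [Finset.sum_singleton, pderiv_X_self, one_mul, sub_zero, Sh_zero]

lemma B_uu (W : Fin 2 → ℤ) :
    B P W (X ((0 : Fin 1), (0 : Fin 2 → ℤ))) (X ((0 : Fin 1), (0 : Fin 2 → ℤ))) = P 0 0 W := by
  rw [B_XX, sub_zero, add_zero, Sh_zero]

include hP in
lemma Pskew : ∀ K : Fin 2 → ℤ, P 0 0 (-K) = - Sh (-K) (P 0 0 K) := by
  have key : ∀ w z : ℤ, P 0 0 (v (-w) (-z)) = - Sh (v (-w) (-z)) (P 0 0 (v w z)) := by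
    intro w z
    by_cases hz : z = 0
    · subst hz
      simp only [neg_zero]
      by_cases h2 : w = 2
      · subst h2
        rw [hP2v f F b P hP, hPm2v f F b P hP]
        simp only [map_mul, map_add, map_neg, Sh_C, Sh_Sh, v_add, Int.reduceAdd,
          Int.reduceNeg, Sh_v00]
        try ring
      · by_cases h1 : w = 1
        · subst h1
          rw [hP1v f F b P hP, hPm1v f F b P hP]
          simp only [map_mul, map_add, map_neg, Sh_C, Sh_Sh, v_add, Int.reduceAdd,
            Int.reduceNeg, Sh_v00]
          try ring
        · by_cases hm1 : w = -1
          · subst hm1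
            simp only [neg_neg]
            rw [hPm1v f F b P hP, hP1v f F b P hP]
            simp only [map_mul, map_add, map_neg, Sh_C, Sh_Sh, v_add, Int.reduceAdd,
              Int.reduceNeg, Sh_v00]
            try ring
          · by_cases hm2 : w = -2
            · subst hm2
              simp only [neg_neg]
              rw [hPm2v f F b P hP, hP2v f F b P hP]
              simp [map_mul, map_add, map_neg, Sh_C, Sh_Sh, v_add, Sh_v00]
              try ring
            · rw [hPw2 f F b P hP _ _ (by omega) (by omega) (by omega) (by omega),
                hPw2 f F b P hP _ _ h2 h1 hm1 hm2, map_zero, neg_zero]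
    · rw [hPz2 f F b P hP _ _ (by omega), hPz2 f F b P hP _ _ hz, map_zero, neg_zero]
  intro K
  obtain ⟨w, z, rfl⟩ : ∃ w z, K = v w z := ⟨K 0, K 1, T_eq K⟩
  rw [v_neg]
  exact key w z

end Specific2


section Specific3

variable (f F f' F' : A 1 2) (b ai : ℂ)
variable (P : Fin 1 → Fin 1 → (Fin 2 → ℤ) → A 1 2)
variable (hdf : ∀ N : Fin 2 → ℤ, pderiv ((0 : Fin 1), N) f = if N = 0 then f' else 0)
variable (hdF : ∀ N : Fin 2 → ℤ, pderiv ((0 : Fin 1), N) F = if N = 0 then F' else 0)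
variable (hFs : F = C ai * (f * F'))
variable (hP : P = fun _ _ T =>
      if T = v 2 0 then f * Sh (v 1 0) F * Sh (v 2 0) f
      else if T = v 1 0 then f * Sh (v 1 0) f * (F + Sh (v 1 0) F + C b)
      else if T = v (-1) 0 then -(Sh (v (-1) 0) f * f * (F + Sh (v (-1) 0) F + C b))
      else if T = v (-2) 0 then -(Sh (v (-2) 0) f * Sh (v (-1) 0) F * f)
      else 0)

set_option maxHeartbeats 4000000 in
include hdf hdF hFs hP in
lemma core : ∀ T U : Fin 2 → ℤ,
    Jx P T U (X ((0 : Fin 1), (0 : Fin 2 → ℤ))) (X ((0 : Fin 1), (0 : Fin 2 → ℤ)))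
      (X ((0 : Fin 1), (0 : Fin 2 → ℤ))) = 0 := by
  have hBL := BLsum f F f' F' b P hdf hdF hP
  have hBR := BRsum f F f' F' b P hdf hdF hP
  have hp2 := hP2v f F b P hP
  have hp1 := hP1v f F b P hP
  have hpm1 := hPm1v f F b P hP
  have hpm2 := hPm2v f F b P hP
  have hpw := hPw2 f F b P hP
  have hpz := hPz2 f F b P hP
  have hdsf := dsf f f' hdf
  have hdsF := dsF F F' hdF
  have hgs := hGs f F F' ai hFs
  have hz0 : P 0 0 (v (0) 0) = 0 := hpw (0) 0 (by norm_num) (by norm_num) (by norm_num) (by norm_num)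
  have hz00 : P 0 0 (0 : Fin 2 → ℤ) = 0 := by rw [← v00]; exact hz0
  have hz3 : P 0 0 (v (3) 0) = 0 := hpw (3) 0 (by norm_num) (by norm_num) (by norm_num) (by norm_num)
  have hzm3 : P 0 0 (v (-3) 0) = 0 := hpw (-3) 0 (by norm_num) (by norm_num) (by norm_num) (by norm_num)
  have hz4 : P 0 0 (v (4) 0) = 0 := hpw (4) 0 (by norm_num) (by norm_num) (by norm_num) (by norm_num)
  have hzm4 : P 0 0 (v (-4) 0) = 0 := hpw (-4) 0 (by norm_num) (by norm_num) (by norm_num) (by norm_num)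
  have hz5 : P 0 0 (v (5) 0) = 0 := hpw (5) 0 (by norm_num) (by norm_num) (by norm_num) (by norm_num)
  have hzm5 : P 0 0 (v (-5) 0) = 0 := hpw (-5) 0 (by norm_num) (by norm_num) (by norm_num) (by norm_num)
  have hz6 : P 0 0 (v (6) 0) = 0 := hpw (6) 0 (by norm_num) (by norm_num) (by norm_num) (by norm_num)
  have hzm6 : P 0 0 (v (-6) 0) = 0 := hpw (-6) 0 (by norm_num) (by norm_num) (by norm_num) (by norm_num)
  have hz7 : P 0 0 (v (7) 0) = 0 := hpw (7) 0 (by norm_num) (by norm_num) (by norm_num) (by norm_num)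
  have hzm7 : P 0 0 (v (-7) 0) = 0 := hpw (-7) 0 (by norm_num) (by norm_num) (by norm_num) (by norm_num)
  have hz8 : P 0 0 (v (8) 0) = 0 := hpw (8) 0 (by norm_num) (by norm_num) (by norm_num) (by norm_num)
  have hzm8 : P 0 0 (v (-8) 0) = 0 := hpw (-8) 0 (by norm_num) (by norm_num) (by norm_num) (by norm_num)
  have hz9 : P 0 0 (v (9) 0) = 0 := hpw (9) 0 (by norm_num) (by norm_num) (by norm_num) (by norm_num)
  have hzm9 : P 0 0 (v (-9) 0) = 0 := hpw (-9) 0 (by norm_num) (by norm_num) (by norm_num) (by norm_num)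
  have hz10 : P 0 0 (v (10) 0) = 0 := hpw (10) 0 (by norm_num) (by norm_num) (by norm_num) (by norm_num)
  have hzm10 : P 0 0 (v (-10) 0) = 0 := hpw (-10) 0 (by norm_num) (by norm_num) (by norm_num) (by norm_num)
  suffices key : ∀ m n s t : ℤ,
      B P (v m n) (X ((0 : Fin 1), (0 : Fin 2 → ℤ))) (P 0 0 (v s t))
        - B P (v s t) (X ((0 : Fin 1), (0 : Fin 2 → ℤ))) (P 0 0 (v m n))
        - B P (v s t) (P 0 0 (v m n - v s t)) (X ((0 : Fin 1), (0 : Fin 2 → ℤ))) = 0 by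
    intro T U
    obtain ⟨m, n, rfl⟩ : ∃ m n, T = v m n := ⟨T 0, T 1, T_eq T⟩
    obtain ⟨s, t, rfl⟩ : ∃ s t, U = v s t := ⟨U 0, U 1, T_eq U⟩
    unfold Jx
    rw [B_uu P, B_uu P, B_uu P]
    exact key m n s t
  intro m n s t
  rw [hBL (v m n) (v s t), hBL (v s t) (v m n), v_sub, hBR (v s t) (v (m - s) (n - t))]
  by_cases hn : n = 0
  · subst hn
    by_cases ht : t = 0
    · subst ht
      by_cases hs4 : -4 ≤ s ∧ s ≤ 4
      · by_cases hm6 : -6 ≤ m ∧ m ≤ 6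
        · obtain ⟨hm1, hm2⟩ := hm6
          obtain ⟨hs1, hs2⟩ := hs4
          simp only [sum_S5]
          interval_cases m <;> interval_cases s <;>
            · simp only [hp2, hp1, hpm1, hpm2, hz0, hz3, hzm3, hz4, hzm4, hz5, hzm5, hz6, hzm6, hz7, hzm7, hz8, hzm8, hz9, hzm9, hz10, hzm10, hdsf, hdsF, hdf, hdF, pderiv_mul,
                pderiv_C, map_add, map_mul, map_neg, map_zero, Sh_C, Sh_Sh, v_add, v_sub,
                v_eq_iff, v_eq_zero, Sh_v00, Int.reduceEq, Int.reduceNeg, Int.reduceAdd,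
                Int.reduceSub, reduceIte, and_true, true_and, and_false, false_and, and_self,
                not_false_eq_true, mul_zero, zero_mul, add_zero, zero_add, neg_zero, sub_zero,
                zero_sub, sub_self, neg_neg, hz00, Sh_zero]
              try simp only [hgs, map_mul, map_add, Sh_C]
              try simp only [hFs, map_mul, map_add, Sh_C]
              try ring
        · rw [Finset.sum_eq_zero ?h1, Finset.sum_eq_zero ?h2, Finset.sum_eq_zero ?h3]
          · norm_num
          case h1 =>
            intro N hN
            rcases mem_S5_elim N hN with rfl | rfl | rfl | rfl | rfl <;> rw [v_sub] <;>
              first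
                  | rw [hpw (m - -2) (0 - 0) (by omega) (by omega) (by omega) (by omega), map_zero, mul_zero]
                  | rw [hpw (m - -1) (0 - 0) (by omega) (by omega) (by omega) (by omega), map_zero, mul_zero]
                  | rw [hpw (m - 0) (0 - 0) (by omega) (by omega) (by omega) (by omega), map_zero, mul_zero]
                  | rw [hpw (m - 1) (0 - 0) (by omega) (by omega) (by omega) (by omega), map_zero, mul_zero]
                  | rw [hpw (m - 2) (0 - 0) (by omega) (by omega) (by omega) (by omega), map_zero, mul_zero]
                  | rw [hpw (s - -2) (0 - 0) (by omega) (by omega) (by omega) (by omega), map_zero, mul_zero]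
                  | rw [hpw (s - -1) (0 - 0) (by omega) (by omega) (by omega) (by omega), map_zero, mul_zero]
                  | rw [hpw (s - 0) (0 - 0) (by omega) (by omega) (by omega) (by omega), map_zero, mul_zero]
                  | rw [hpw (s - 1) (0 - 0) (by omega) (by omega) (by omega) (by omega), map_zero, mul_zero]
                  | rw [hpw (s - 2) (0 - 0) (by omega) (by omega) (by omega) (by omega), map_zero, mul_zero]
          case h2 =>
            intro N _
            rw [hpw m 0 (by omega) (by omega) (by omega) (by omega), map_zero, zero_mul]
          case h3 =>
            intro M _
            rw [hpw (m - s) (0 - 0) (by omega) (by omega) (by omega) (by omega), map_zero,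
              map_zero, mul_zero]
      · rw [Finset.sum_eq_zero ?h1, Finset.sum_eq_zero ?h2, Finset.sum_eq_zero ?h3]
        · norm_num
        case h1 =>
          intro N _
          rw [hpw s 0 (by omega) (by omega) (by omega) (by omega), map_zero, zero_mul]
        case h2 =>
          intro N hN
          rcases mem_S5_elim N hN with rfl | rfl | rfl | rfl | rfl <;> rw [v_sub] <;>
            first
                | rw [hpw (m - -2) (0 - 0) (by omega) (by omega) (by omega) (by omega), map_zero, mul_zero]
                | rw [hpw (m - -1) (0 - 0) (by omega) (by omega) (by omega) (by omega), map_zero, mul_zero]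
                | rw [hpw (m - 0) (0 - 0) (by omega) (by omega) (by omega) (by omega), map_zero, mul_zero]
                | rw [hpw (m - 1) (0 - 0) (by omega) (by omega) (by omega) (by omega), map_zero, mul_zero]
                | rw [hpw (m - 2) (0 - 0) (by omega) (by omega) (by omega) (by omega), map_zero, mul_zero]
                | rw [hpw (s - -2) (0 - 0) (by omega) (by omega) (by omega) (by omega), map_zero, mul_zero]
                | rw [hpw (s - -1) (0 - 0) (by omega) (by omega) (by omega) (by omega), map_zero, mul_zero]
                | rw [hpw (s - 0) (0 - 0) (by omega) (by omega) (by omega) (by omega), map_zero, mul_zero]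
                | rw [hpw (s - 1) (0 - 0) (by omega) (by omega) (by omega) (by omega), map_zero, mul_zero]
                | rw [hpw (s - 2) (0 - 0) (by omega) (by omega) (by omega) (by omega), map_zero, mul_zero]
        case h3 =>
          intro M hM
          rcases mem_S5_elim M hM with rfl | rfl | rfl | rfl | rfl <;> rw [v_add] <;>
            rw [hpw _ _ (by omega) (by omega) (by omega) (by omega), zero_mul]
    · rw [Finset.sum_eq_zero ?h1, Finset.sum_eq_zero ?h2, Finset.sum_eq_zero ?h3]
      · norm_num
      case h1 =>
        intro N _
        rw [hpz s t (by omega), map_zero, zero_mul]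
      case h2 =>
        intro N hN
        rcases mem_S5_elim N hN with rfl | rfl | rfl | rfl | rfl <;> rw [v_sub] <;>
          first
              | rw [hpz (m - -2) (n - 0) (by omega), map_zero, mul_zero]
              | rw [hpz (m - -1) (n - 0) (by omega), map_zero, mul_zero]
              | rw [hpz (m - 0) (n - 0) (by omega), map_zero, mul_zero]
              | rw [hpz (m - 1) (n - 0) (by omega), map_zero, mul_zero]
              | rw [hpz (m - 2) (n - 0) (by omega), map_zero, mul_zero]
              | rw [hpz (s - -2) (t - 0) (by omega), map_zero, mul_zero]
              | rw [hpz (s - -1) (t - 0) (by omega), map_zero, mul_zero]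
              | rw [hpz (s - 0) (t - 0) (by omega), map_zero, mul_zero]
              | rw [hpz (s - 1) (t - 0) (by omega), map_zero, mul_zero]
              | rw [hpz (s - 2) (t - 0) (by omega), map_zero, mul_zero]
      case h3 =>
        intro M hM
        rcases mem_S5_elim M hM with rfl | rfl | rfl | rfl | rfl <;> rw [v_add] <;>
          rw [hpz _ _ (by omega), zero_mul]
  · by_cases ht : t = 0
    · subst ht
      rw [Finset.sum_eq_zero ?h1, Finset.sum_eq_zero ?h2, Finset.sum_eq_zero ?h3]
      · norm_num
      case h1 =>
        intro N hN
        rcases mem_S5_elim N hN with rfl | rfl | rfl | rfl | rfl <;> rw [v_sub] <;>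
          first
              | rw [hpz (m - -2) (n - 0) (by omega), map_zero, mul_zero]
              | rw [hpz (m - -1) (n - 0) (by omega), map_zero, mul_zero]
              | rw [hpz (m - 0) (n - 0) (by omega), map_zero, mul_zero]
              | rw [hpz (m - 1) (n - 0) (by omega), map_zero, mul_zero]
              | rw [hpz (m - 2) (n - 0) (by omega), map_zero, mul_zero]
              | rw [hpz (s - -2) (t - 0) (by omega), map_zero, mul_zero]
              | rw [hpz (s - -1) (t - 0) (by omega), map_zero, mul_zero]
              | rw [hpz (s - 0) (t - 0) (by omega), map_zero, mul_zero]
              | rw [hpz (s - 1) (t - 0) (by omega), map_zero, mul_zero]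
              | rw [hpz (s - 2) (t - 0) (by omega), map_zero, mul_zero]
      case h2 =>
        intro N _
        rw [hpz m n (by omega), map_zero, zero_mul]
      case h3 =>
        intro M _
        rw [hpz (m - s) (n - 0) (by omega), map_zero, map_zero, mul_zero]
    · rw [Finset.sum_eq_zero ?h1, Finset.sum_eq_zero ?h2, Finset.sum_eq_zero ?h3]
      · norm_num
      case h1 =>
        intro N _
        rw [hpz s t (by omega), map_zero, zero_mul]
      case h2 =>
        intro N _
        rw [hpz m n (by omega), map_zero, zero_mul]
      case h3 =>
        intro M hM
        rcases mem_S5_elim M hM with rfl | rfl | rfl | rfl | rfl <;> rw [v_add] <;>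
          rw [hpz _ _ (by omega), zero_mul]

end Specific3

/-- for `f = f(u)`, `F = F(u)` with `f·F' = a·F` (`a ≠ 0`) and `β ∈ ℂ`, the
essentially one-dimensional second-order operator
`P = f S₁∘F S₁∘f + f((F+β)S₁ + S₁∘(F+β))∘f − f((F+β)S₁^{−1} + S₁^{−1}∘(F+β))∘f
− f S₁^{−1}∘F S₁^{−1}∘f` is Hamiltonian: its master-formula λ-bracket is skewsymmetric
and satisfies the PVA-Jacobi identity for all triples. -/
theorem second_order_one_dimensional_is_hamiltonian (f F : A 1 2)
    (hfdep : ∀ N : Fin 2 → ℤ, N ≠ 0 → pderiv ((0 : Fin 1), N) f = 0)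
    (hFdep : ∀ N : Fin 2 → ℤ, N ≠ 0 → pderiv ((0 : Fin 1), N) F = 0)
    (a : ℂ) (ha : a ≠ 0)
    (hfF : f * pderiv ((0 : Fin 1), (0 : Fin 2 → ℤ)) F = C a * F)
    (β : ℂ)
    (P : Fin 1 → Fin 1 → (Fin 2 → ℤ) → A 1 2)
    (hP : P = fun _ _ T =>
      if T = v 2 0 then f * Sh (v 1 0) F * Sh (v 2 0) f
      else if T = v 1 0 then f * Sh (v 1 0) f * (F + Sh (v 1 0) F + C β)
      else if T = v (-1) 0 then -(Sh (v (-1) 0) f * f * (F + Sh (v (-1) 0) F + C β))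
      else if T = v (-2) 0 then -(Sh (v (-2) 0) f * Sh (v (-1) 0) F * f)
      else 0) :
    (∀ (p q : A 1 2) (T : Fin 2 → ℤ), B P (-T) q p = - Sh (-T) (B P T p q)) ∧
    (∀ p q r : A 1 2, Jacobi P p q r) := by
  have hdf : ∀ N : Fin 2 → ℤ, pderiv ((0 : Fin 1), N) f =
      if N = 0 then pderiv ((0 : Fin 1), (0 : Fin 2 → ℤ)) f else 0 := by
    intro N
    by_cases h : N = 0
    · rw [if_pos h, h]
    · rw [if_neg h]; exact hfdep N h
  have hdF : ∀ N : Fin 2 → ℤ, pderiv ((0 : Fin 1), N) F =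
      if N = 0 then pderiv ((0 : Fin 1), (0 : Fin 2 → ℤ)) F else 0 := by
    intro N
    by_cases h : N = 0
    · rw [if_pos h, h]
    · rw [if_neg h]; exact hFdep N h
  have hFs : F = C a⁻¹ * (f * pderiv ((0 : Fin 1), (0 : Fin 2 → ℤ)) F) :=
    calc F = (C a⁻¹ * C a) * F := by rw [← C_mul, inv_mul_cancel₀ ha, C_1, one_mul]
    _ = C a⁻¹ * (C a * F) := by ring
    _ = C a⁻¹ * (f * pderiv ((0 : Fin 1), (0 : Fin 2 → ℤ)) F) := by rw [← hfF]
  have hskew := skew P (Pskew f F β P hP)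
  refine ⟨hskew, ?_⟩
  intro p q r
  unfold Jacobi
  intro T U
  have hz := Jx_eq_zero P hskew
    (core f F (pderiv ((0 : Fin 1), (0 : Fin 2 → ℤ)) f)
      (pderiv ((0 : Fin 1), (0 : Fin 2 → ℤ)) F) β a⁻¹ P hdf hdF hFs hP) p q r T U
  unfold Jx at hz
  exact sub_eq_zero.mp hz

end MPVA
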